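/- Let k ≥ 1 and n ≥ k + 3 be integers. The graph K₁ ∨ (K_{n−k−2} + (k+1)K₁) has no spanning tree with leaf degree at most k; that is, every spanning tree of K₁ ∨ (K_{n−k−2} + (k+1)K₁) has a vertex adjacent in the tree to at least k + 1 leaves. -/

import Mathlib

open Finset
open scoped Classical

/-- The adjacency matrix of a simple graph over ℝ. -/
noncomputable def adjMat {V : Type*} [Fintype V] (G : SimpleGraph V) :
    Matrix V V ℝ := fun i j => if G.Adj i j then 1 else 0

/-- The spectral radius of a graph: the largest (real) eigenvalue of its
adjacency matrix. -/
noncomputable def specRad {V : Type*} [Fintype V] (G : SimpleGraph V) : ℝ :=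
  sSup {μ : ℝ | Module.End.HasEigenvalue (Matrix.mulVecLin (adjMat G)) μ}

/-- The signless Laplacian matrix `Q = D + A` of a simple graph. -/
noncomputable def qMat {V : Type*} [Fintype V] (G : SimpleGraph V) :
    Matrix V V ℝ := fun i j =>
  (if i = j then ((univ.filter fun u => G.Adj i u).card : ℝ) else 0) +
    (if G.Adj i j then 1 else 0)

/-- The signless Laplacian spectral radius of a graph: the largest (real)
eigenvalue of `Q = D + A`. -/
noncomputable def qRad {V : Type*} [Fintype V] (G : SimpleGraph V) : ℝ :=
  sSup {μ : ℝ | Module.End.HasEigenvalue (Matrix.mulVecLin (qMat G)) μ}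

/-- `G` has a spanning `k`-ended-tree: a spanning tree with at most `k`
leaves (vertices of degree 1 in the tree). -/
noncomputable def HasSpanningKEndedTree {V : Type*} [Fintype V]
    (G : SimpleGraph V) (k : ℕ) : Prop :=
  ∃ T : SimpleGraph V, T ≤ G ∧ T.IsTree ∧
    (univ.filter fun v => T.degree v = 1).card ≤ k

/-- `G` has a spanning tree with leaf degree at most `k`: every vertex of the
tree is adjacent (in the tree) to at most `k` leaves of the tree. -/
noncomputable def HasSpanningTreeLeafDegLE {V : Type*} [Fintype V]
    (G : SimpleGraph V) (k : ℕ) : Prop :=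
  ∃ T : SimpleGraph V, T ≤ G ∧ T.IsTree ∧
    ∀ v, (univ.filter fun u => T.Adj v u ∧ T.degree u = 1).card ≤ k

/-- The graph `K₁ ∨ (K_{n-k-1} + kK₁)` on `n` vertices: vertex `0` is joined to
everything, vertices `0, …, n-k-1` form a clique `K_{n-k}`, and the last `k`
vertices are only adjacent to vertex `0`. -/
def oneJoinCliquePlusIso (n k : ℕ) : SimpleGraph (Fin n) :=
  SimpleGraph.fromRel fun i j => i.val = 0 ∨ (i.val < n - k ∧ j.val < n - k)

/-- The graph `K₁ ∨ (K_{n-k-2} + (k+1)K₁)` on `n` vertices: vertex `0` is joined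
to everything, vertices `0, …, n-k-2` form a clique `K_{n-k-1}`, and the last
`k+1` vertices are only adjacent to vertex `0`. -/
def oneJoinCliquePlusIso' (n k : ℕ) : SimpleGraph (Fin n) :=
  SimpleGraph.fromRel fun i j =>
    i.val = 0 ∨ (i.val < n - (k + 1) ∧ j.val < n - (k + 1))

/-- **Lemma.**  For `k ≥ 1` and `n ≥ k + 3`, the graph
`K₁ ∨ (K_{n-k-2} + (k+1)K₁)` has no spanning tree with leaf degree at most `k`:
every spanning tree of it has a vertex adjacent (in the tree) to at least
`k + 1` leaves. -/
theorem extremal_graph_no_spanning_tree_small_leaf_degree {n k : ℕ}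
    (hk : 1 ≤ k) (hn : k + 3 ≤ n) (T : SimpleGraph (Fin n))
    (hle : T ≤ oneJoinCliquePlusIso' n k) (hT : T.IsTree) :
    ∃ v, k + 1 ≤ (univ.filter fun u => T.Adj v u ∧ T.degree u = 1).card := by
  have hnpos : 0 < n := by omega
  set z : Fin n := ⟨0, hnpos⟩ with hz
  -- every high vertex's only possible neighbor is z
  have honly : ∀ u w : Fin n, n - (k + 1) ≤ u.val → T.Adj u w → w = z := by
    intro u w hu hadj
    have hG := hle hadj
    rw [oneJoinCliquePlusIso', SimpleGraph.fromRel_adj] at hG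
    obtain ⟨hne, hrel⟩ := hG
    have huv : u.val ≠ 0 := by omega
    have hult : ¬ u.val < n - (k + 1) := by omega
    rcases hrel with (h0 | ⟨h1, h2⟩) | (h0 | ⟨h1, h2⟩)
    · exact absurd h0 huv
    · exact absurd h1 hult
    · exact Fin.ext h0
    · exact absurd h2 hult
  -- every high vertex is adjacent to z in T
  have hadjz : ∀ u : Fin n, n - (k + 1) ≤ u.val → T.Adj u z := by
    intro u hu
    have huz : u ≠ z := by
      intro h; rw [h] at hu; simp [hz] at hu; omega
    obtain ⟨p⟩ := hT.isConnected.preconnected u z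
    cases p with
    | nil => exact absurd rfl huz
    | cons h q => have := honly _ _ hu h; rwa [this] at h
  -- every high vertex has degree 1 in T
  have hdeg : ∀ u : Fin n, n - (k + 1) ≤ u.val → T.degree u = 1 := by
    intro u hu
    have : T.neighborFinset u = {z} := by
      ext w
      simp only [SimpleGraph.mem_neighborFinset, Finset.mem_singleton]
      constructor
      · exact honly u w hu
      · rintro rfl; exact hadjz u hu
    rw [SimpleGraph.degree, this, Finset.card_singleton]
  refine ⟨z, ?_⟩
  -- the injection from Fin (k+1)
  have hf : ∀ i : Fin (k + 1), n - (k + 1) + i.val < n := by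
    intro i; have := i.isLt; omega
  calc k + 1 = (Finset.univ : Finset (Fin (k + 1))).card := by simp
    _ ≤ _ := by
        apply Finset.card_le_card_of_injOn (fun i => (⟨n - (k + 1) + i.val, hf i⟩ : Fin n))
        · intro i _
          simp only [Finset.mem_coe, Finset.mem_filter, Finset.mem_univ, true_and]
          have hge : n - (k + 1) ≤ n - (k + 1) + i.val := Nat.le_add_right _ _
          exact ⟨(hadjz _ hge).symm, hdeg _ hge⟩
        · intro i _ j _ h
          have : n - (k + 1) + i.val = n - (k + 1) + j.val := congrArg Fin.val h
          exact Fin.ext (by omega)
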